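/- Two 2-dimensional real linear subspaces V, W of ℂ² (with its standard Hermitian/Kähler structure) have the same symplecticity if and only if there is a unitary transformation U ∈ U(2) with U(V) = W, where the symplecticity of V is |ω(e₁,e₂)| for any orthonormal basis (e₁,e₂) of V and ω the standard symplectic form. -/

import Mathlib

open scoped InnerProductSpace
open Complex

noncomputable section
local notation "E2" => EuclideanSpace ℂ (Fin 2)

lemma sympAux_conj_eq_neg {s : ℂ} (h : s.re = 0) : (starRingEnd ℂ) s = -s :=
  Complex.ext (by simp [h]) (by simp)

lemma sympAux_inner_one {x : E2} (h : (inner ℂ x x : ℂ).re = 1) : (inner ℂ x x : ℂ) = 1 :=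
  Complex.ext h (by simpa using inner_self_im (𝕜 := ℂ) x)

lemma sympAux_real_smul (r : ℝ) (x : E2) : r • x = (r : ℂ) • x := by
  rw [← algebraMap_smul ℂ r x, Complex.coe_algebraMap]

lemma sympAux_expand (α β γ δ : ℝ) (f₁ f₂ : E2) :
    (inner ℂ (α • f₁ + β • f₂) (γ • f₁ + δ • f₂) : ℂ) =
      (α*γ:ℂ) * inner ℂ f₁ f₁ + (α*δ:ℂ) * inner ℂ f₁ f₂
        + (β*γ:ℂ) * inner ℂ f₂ f₁ + (β*δ:ℂ) * inner ℂ f₂ f₂ := by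
  simp only [sympAux_real_smul, inner_add_left, inner_add_right, inner_smul_left,
    inner_smul_right, Complex.conj_ofReal]
  ring

lemma sympAux_change_basis {f₁ f₂ a₁ a₂ : E2}
    (hf₁ : (inner ℂ f₁ f₁ : ℂ) = 1) (hf₂ : (inner ℂ f₂ f₂ : ℂ) = 1)
    (hf : (inner ℂ f₁ f₂ : ℂ).re = 0)
    {α β γ δ : ℝ} (ha₁ : α • f₁ + β • f₂ = a₁) (ha₂ : γ • f₁ + δ • f₂ = a₂)
    (hn₁ : (inner ℂ a₁ a₁ : ℂ).re = 1) (hn₂ : (inner ℂ a₂ a₂ : ℂ).re = 1)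
    (hn : (inner ℂ a₁ a₂ : ℂ).re = 0) :
    |(inner ℂ a₁ a₂ : ℂ).im| = |(inner ℂ f₁ f₂ : ℂ).im| := by
  set s : ℂ := (inner ℂ f₁ f₂ : ℂ) with hs
  have hconj : (inner ℂ f₂ f₁ : ℂ) = -s :=
    (inner_conj_symm f₂ f₁).symm.trans (sympAux_conj_eq_neg hf)
  have e11 : (inner ℂ a₁ a₁ : ℂ) = ((α^2 + β^2 : ℝ) : ℂ) := by
    rw [← ha₁, sympAux_expand, hf₁, hf₂, hconj]
    push_cast; ring
  have e22 : (inner ℂ a₂ a₂ : ℂ) = ((γ^2 + δ^2 : ℝ) : ℂ) := by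
    rw [← ha₂, sympAux_expand, hf₁, hf₂, hconj]
    push_cast; ring
  have e12 : (inner ℂ a₁ a₂ : ℂ) = ((α*γ + β*δ : ℝ) : ℂ) + ((α*δ - β*γ : ℝ) : ℂ) * s := by
    rw [← ha₁, ← ha₂, sympAux_expand, hf₁, hf₂, hconj]
    push_cast; ring
  have h1 : α^2 + β^2 = 1 := by
    have := hn₁; rw [e11] at this; exact_mod_cast this
  have h2 : γ^2 + δ^2 = 1 := by
    have := hn₂; rw [e22] at this; exact_mod_cast this
  have h3 : α*γ + β*δ = 0 := by
    have := hn; rw [e12] at this; simpa [hf] using this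
  have hdet : (α*δ - β*γ)^2 = 1 := by nlinarith [sq_nonneg (α*δ - β*γ)]
  have him : (inner ℂ a₁ a₂ : ℂ).im = (α*δ - β*γ) * s.im := by
    rw [e12]; simp [h3]
  have h4 : |α*δ - β*γ| = 1 := by
    nlinarith [abs_nonneg (α*δ - β*γ), _root_.sq_abs (α*δ - β*γ)]
  rw [him, abs_mul, h4, one_mul]


lemma sympAux_exists_onb (e₁ e₂ : E2) (k : ℝ)
    (h1 : (inner ℂ e₁ e₁ : ℂ) = 1) (h2 : (inner ℂ e₂ e₂ : ℂ) = 1)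
    (h12 : (inner ℂ e₁ e₂ : ℂ) = (k : ℂ) * Complex.I) :
    ∃ b : OrthonormalBasis (Fin 2) ℂ (EuclideanSpace ℂ (Fin 2)),
      b 0 = e₁ ∧ e₂ = ((k : ℂ) * Complex.I) • e₁
        + ((Real.sqrt (1 - k^2) : ℝ) : ℂ) • b 1 := by
  have hcard : Module.finrank ℂ (EuclideanSpace ℂ (Fin 2)) = Fintype.card (Fin 2) := by
    simp [finrank_euclideanSpace]
  have hne1 : ‖e₁‖ = 1 := by
    have h := inner_self_eq_norm_sq (𝕜 := ℂ) e₁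
    rw [h1] at h
    have h' : (1:ℝ) = ‖e₁‖^2 := by simpa using h
    nlinarith [norm_nonneg e₁]
  set w : E2 := e₂ - ((k : ℂ) * Complex.I) • e₁ with hw
  have h21 : (inner ℂ e₂ e₁ : ℂ) = -((k:ℂ) * Complex.I) := by
    rw [← inner_conj_symm e₂ e₁, h12]
    simp [Complex.ext_iff]
  have hiw : (inner ℂ e₁ w : ℂ) = 0 := by
    simp only [hw, inner_sub_right, inner_smul_right, h1, h12, mul_one, sub_self]
  have hww : (inner ℂ w w : ℂ) = ((1 - k^2 : ℝ) : ℂ) := by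
    simp only [hw, inner_sub_left, inner_sub_right, inner_smul_left, inner_smul_right,
      h1, h2, h12, h21, map_mul, Complex.conj_ofReal, Complex.conj_I]
    push_cast
    ring_nf
    simp [Complex.I_sq]
    ring
  by_cases hw0 : w = 0
  · have hk : Real.sqrt (1 - k^2) = 0 := by
      have : ((1 - k^2 : ℝ) : ℂ) = 0 := by rw [← hww, hw0]; simp
      have : (1 - k^2 : ℝ) = 0 := by exact_mod_cast this
      rw [this, Real.sqrt_zero]
    have horth : Orthonormal ℂ (Set.restrict {(0 : Fin 2)} ![e₁, 0]) := by
      rw [orthonormal_iff_ite]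
      rintro ⟨i, hi⟩ ⟨j, hj⟩
      simp only [Set.mem_singleton_iff] at hi hj
      subst hi; subst hj
      simp [Set.restrict, h1, -inner_self_eq_norm_sq_to_K]
    obtain ⟨b, hb⟩ := horth.exists_orthonormalBasis_extension_of_card_eq hcard
    refine ⟨b, by simpa using hb 0 rfl, ?_⟩
    have he2 : e₂ = ((k:ℂ) * Complex.I) • e₁ := by
      have := sub_eq_zero.mp hw0
      linear_combination (norm := module) this
    rw [he2, hk]
    simp
  · set r : ℝ := ‖w‖ with hr
    have hr0 : r ≠ 0 := by simpa [hr] using hw0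
    set u : E2 := ((r : ℂ))⁻¹ • w with hu
    have hru : ((r:ℂ)) • u = w := by
      rw [hu, smul_smul, mul_inv_cancel₀ (by exact_mod_cast hr0), one_smul]
    have hwn : r^2 = 1 - k^2 := by
      have h := inner_self_eq_norm_sq (𝕜 := ℂ) w
      rw [hww] at h
      have h' : (1 - k^2 : ℝ) = ‖w‖^2 := by
        rw [← h]; simp [RCLike.ofReal_re, ← Complex.ofReal_pow]
      rw [hr]; linarith
    have hrs : r = Real.sqrt (1 - k^2) := by
      rw [← hwn, Real.sqrt_sq (norm_nonneg w)]
    have huu : (inner ℂ u u : ℂ) = 1 := by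
      rw [hu, inner_smul_left, inner_smul_right, hww]
      rw [map_inv₀, Complex.conj_ofReal]
      have : ((1 - k^2 : ℝ) : ℂ) = (r:ℂ)^2 := by exact_mod_cast congrArg (Complex.ofReal) hwn.symm
      rw [this]
      have hrC : (r:ℂ) ≠ 0 := by exact_mod_cast hr0
      field_simp
    have h1u : (inner ℂ e₁ u : ℂ) = 0 := by
      rw [hu, inner_smul_right, hiw, mul_zero]
    have hu1 : (inner ℂ u e₁ : ℂ) = 0 := by
      rw [← inner_conj_symm u e₁, h1u, map_zero]
    have horth : Orthonormal ℂ (Set.restrict (Set.univ : Set (Fin 2)) ![e₁, u]) := by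
      rw [orthonormal_iff_ite]
      rintro ⟨i, -⟩ ⟨j, -⟩
      fin_cases i <;> fin_cases j <;>
        simp [Set.restrict, h1, huu, h1u, hu1, Fin.ext_iff, -inner_self_eq_norm_sq_to_K]
    obtain ⟨b, hb⟩ := horth.exists_orthonormalBasis_extension_of_card_eq hcard
    have hb0 : b 0 = e₁ := by simpa using hb 0 trivial
    have hb1 : b 1 = u := by simpa using hb 1 trivial
    refine ⟨b, hb0, ?_⟩
    rw [hb1, ← hrs, hru, hw]
    module

lemma sympAux_exists_unitary (e₁ e₂ f₁ f₂ : E2) (k : ℝ)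
    (he₁ : (inner ℂ e₁ e₁ : ℂ) = 1) (he₂ : (inner ℂ e₂ e₂ : ℂ) = 1)
    (he : (inner ℂ e₁ e₂ : ℂ) = (k:ℂ) * Complex.I)
    (hf₁ : (inner ℂ f₁ f₁ : ℂ) = 1) (hf₂ : (inner ℂ f₂ f₂ : ℂ) = 1)
    (hf : (inner ℂ f₁ f₂ : ℂ) = (k:ℂ) * Complex.I) :
    ∃ U : EuclideanSpace ℂ (Fin 2) ≃ₗᵢ[ℂ] EuclideanSpace ℂ (Fin 2),
      U e₁ = f₁ ∧ U e₂ = f₂ := by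
  obtain ⟨b, hb0, hb⟩ := sympAux_exists_onb e₁ e₂ k he₁ he₂ he
  obtain ⟨c, hc0, hc⟩ := sympAux_exists_onb f₁ f₂ k hf₁ hf₂ hf
  set U := b.repr.trans c.repr.symm with hU
  have key : ∀ i, U (b i) = c i := by
    intro i
    simp [hU, LinearIsometryEquiv.trans_apply, OrthonormalBasis.repr_self,
      OrthonormalBasis.repr_symm_single]
  have hUe₁ : U e₁ = f₁ := by rw [← hb0, key 0, hc0]
  refine ⟨U, hUe₁, ?_⟩
  rw [hb, map_add, map_smul, map_smul, hUe₁, key 1, ← hc]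

open scoped InnerProductSpace in
/-- Two 2-dimensional real subspaces of `ℂ²` have the same symplecticity iff some unitary
transformation maps one onto the other. Here `V = span_ℝ{e₁,e₂}` and `W = span_ℝ{f₁,f₂}`
for real-orthonormal pairs, the standard symplectic form is `ω(u,v) = Im ⟪u,v⟫`, and the
symplecticity of `V` is `|ω(e₁,e₂)|`. -/
theorem symplecticity_iff_unitary
    (ω : EuclideanSpace ℂ (Fin 2) → EuclideanSpace ℂ (Fin 2) → ℝ)
    (hω : ∀ u v, ω u v = (inner ℂ u v : ℂ).im)
    (V W : Submodule ℝ (EuclideanSpace ℂ (Fin 2)))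
    (e₁ e₂ f₁ f₂ : EuclideanSpace ℂ (Fin 2))
    (hV : V = Submodule.span ℝ {e₁, e₂}) (hW : W = Submodule.span ℝ {f₁, f₂})
    (he₁ : (inner ℂ e₁ e₁ : ℂ).re = 1) (he₂ : (inner ℂ e₂ e₂ : ℂ).re = 1)
    (he₁₂ : (inner ℂ e₁ e₂ : ℂ).re = 0)
    (hf₁ : (inner ℂ f₁ f₁ : ℂ).re = 1) (hf₂ : (inner ℂ f₂ f₂ : ℂ).re = 1)
    (hf₁₂ : (inner ℂ f₁ f₂ : ℂ).re = 0)
    (hdimV : Module.finrank ℝ V = 2) (hdimW : Module.finrank ℝ W = 2) :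
    |ω e₁ e₂| = |ω f₁ f₂| ↔
      ∃ U : EuclideanSpace ℂ (Fin 2) ≃ₗᵢ[ℂ] EuclideanSpace ℂ (Fin 2),
        V.map (U.toLinearEquiv.toLinearMap.restrictScalars ℝ) = W := by
  have he₁' := sympAux_inner_one he₁
  have he₂' := sympAux_inner_one he₂
  have hf₁' := sympAux_inner_one hf₁
  have hf₂' := sympAux_inner_one hf₂
  set ke : ℝ := (inner ℂ e₁ e₂ : ℂ).im with hke
  set kf : ℝ := (inner ℂ f₁ f₂ : ℂ).im with hkf
  have hre : ∀ k : ℝ, ((k:ℂ) * Complex.I).re = 0 := fun k => by simp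
  have him : ∀ k : ℝ, ((k:ℂ) * Complex.I).im = k := fun k => by simp
  have he12' : (inner ℂ e₁ e₂ : ℂ) = (ke:ℂ) * Complex.I :=
    Complex.ext (by rw [he₁₂, hre]) (by rw [him])
  have hf12' : (inner ℂ f₁ f₂ : ℂ) = (kf:ℂ) * Complex.I :=
    Complex.ext (by rw [hf₁₂, hre]) (by rw [him])
  rw [hω, hω]
  constructor
  · intro h
    rcases abs_eq_abs.mp h with h' | h'
    · obtain ⟨U, hU1, hU2⟩ := sympAux_exists_unitary e₁ e₂ f₁ f₂ ke he₁' he₂' he12'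
        hf₁' hf₂' (by rw [hf12', hkf, hke, h'])
      refine ⟨U, ?_⟩
      rw [hV, hW, Submodule.map_span, Set.image_pair]
      have h1 : (U.toLinearEquiv.toLinearMap.restrictScalars ℝ) e₁ = f₁ := hU1
      have h2 : (U.toLinearEquiv.toLinearMap.restrictScalars ℝ) e₂ = f₂ := hU2
      rw [h1, h2]
    · have h21 : (inner ℂ e₂ e₁ : ℂ) = (kf:ℂ) * Complex.I := by
        rw [← inner_conj_symm e₂ e₁, he12', hke, hkf, h']
        simp [Complex.ext_iff]
      obtain ⟨U, hU1, hU2⟩ := sympAux_exists_unitary e₂ e₁ f₁ f₂ kf he₂' he₁' h21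
        hf₁' hf₂' hf12'
      refine ⟨U, ?_⟩
      rw [hV, hW, Submodule.map_span, Set.image_pair]
      have h1 : (U.toLinearEquiv.toLinearMap.restrictScalars ℝ) e₁ = f₂ := hU2
      have h2 : (U.toLinearEquiv.toLinearMap.restrictScalars ℝ) e₂ = f₁ := hU1
      rw [h1, h2, Set.pair_comm]
  · rintro ⟨U, hU⟩
    have he₁V : e₁ ∈ V := by
      rw [hV]; exact Submodule.subset_span (Set.mem_insert _ _)
    have he₂V : e₂ ∈ V := by
      rw [hV]; exact Submodule.subset_span (Set.mem_insert_of_mem _ rfl)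
    have h1W : U e₁ ∈ Submodule.span ℝ {f₁, f₂} := by
      rw [← hW, ← hU]; exact Submodule.mem_map_of_mem he₁V
    have h2W : U e₂ ∈ Submodule.span ℝ {f₁, f₂} := by
      rw [← hW, ← hU]; exact Submodule.mem_map_of_mem he₂V
    obtain ⟨α, β, hab⟩ := Submodule.mem_span_pair.mp h1W
    obtain ⟨γ, δ, hcd⟩ := Submodule.mem_span_pair.mp h2W
    have hcb := sympAux_change_basis hf₁' hf₂' hf₁₂ hab hcd
      (by rw [LinearIsometryEquiv.inner_map_map]; exact he₁)
      (by rw [LinearIsometryEquiv.inner_map_map]; exact he₂)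
      (by rw [LinearIsometryEquiv.inner_map_map]; exact he₁₂)
    rw [LinearIsometryEquiv.inner_map_map] at hcb
    exact hcb
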